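/- (Plotkin construction.) Let r, m be natural numbers and let c : (Fin (m+1) → ZMod 2) → ZMod 2. Define u, v : (Fin m → ZMod 2) → ZMod 2 by u(w) = c(w; 0) and v(w) = c(w; 0) + c(w; 1), where (w; s) denotes the vector in (ZMod 2)^{m+1} whose first m coordinates are w and whose last coordinate is s. Then c is a codeword of RM(r+1, m+1) if and only if u is a codeword of RM(r+1, m) and v is a codeword of RM(r, m). In particular, every codeword of RM(r+1, m+1) is of the form |u|u ⊕ v| with u ∈ RM(r+1, m) and v ∈ RM(r, m). -/

import Mathlib

/-- The Reed–Muller code `RM r m`. -/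
def RM (r m : ℕ) : Set ((Fin m → ZMod 2) → ZMod 2) :=
  {c | ∃ f : MvPolynomial (Fin m) (ZMod 2),
    f.totalDegree ≤ r ∧ ∀ v : Fin m → ZMod 2, c v = MvPolynomial.eval v f}

/-- Plotkin construction: `c ∈ RM (r+1) (m+1)` iff `u ∈ RM (r+1) m` and `v ∈ RM r m`,
where `u w = c (w; 0)` and `v w = c (w; 0) + c (w; 1)`. -/
theorem plotkin_construction (r m : ℕ) (c : (Fin (m + 1) → ZMod 2) → ZMod 2) :
    c ∈ RM (r + 1) (m + 1) ↔
      (fun w : Fin m → ZMod 2 => c (Fin.snoc w 0)) ∈ RM (r + 1) m ∧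
      (fun w : Fin m → ZMod 2 => c (Fin.snoc w 0) + c (Fin.snoc w 1)) ∈ RM r m := by
  constructor
  · rintro ⟨f, hdeg, hev⟩
    set F := MvPolynomial.rename (finRotate (m + 1)) f with hF
    have hFdeg : F.totalDegree ≤ r + 1 :=
      le_trans (MvPolynomial.totalDegree_rename_le _ f) hdeg
    have hcomp : ∀ (w : Fin m → ZMod 2) (s : ZMod 2),
        (Fin.cons s w : Fin (m + 1) → ZMod 2) ∘ (finRotate (m + 1)) = Fin.snoc w s := by
      intro w s
      funext i
      refine Fin.lastCases ?_ (fun j => ?_) i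
      · simp [finRotate_last]
      · have : finRotate (m + 1) (Fin.castSucc j) = j.succ := by
          have := finRotate_of_lt (n := m) j.isLt
          exact this
        simp [this]
    have hFeval : ∀ (w : Fin m → ZMod 2) (s : ZMod 2),
        c (Fin.snoc w s) =
          Polynomial.eval s (Polynomial.map (MvPolynomial.eval w)
            (MvPolynomial.finSuccEquiv (ZMod 2) m F)) := by
      intro w s
      rw [← MvPolynomial.eval_eq_eval_mv_eval', hF, MvPolynomial.eval_rename, hcomp, hev]
    set q := MvPolynomial.finSuccEquiv (ZMod 2) m F with hq
    set N := q.natDegree + 1 with hN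
    constructor
    · refine ⟨q.coeff 0, ?_, ?_⟩
      · by_cases h0 : q.coeff 0 = 0
        · simp [h0]
        · have := MvPolynomial.totalDegree_coeff_finSuccEquiv_add_le F 0 h0
          simpa using this.trans hFdeg
      · intro w
        show c (Fin.snoc w 0) = _
        rw [hFeval w 0, ← Polynomial.coeff_zero_eq_eval_zero, Polynomial.coeff_map]
    · refine ⟨∑ i ∈ Finset.Ico 1 N, q.coeff i, ?_, ?_⟩
      · refine (MvPolynomial.totalDegree_finset_sum _ _).trans (Finset.sup_le ?_)
        intro i hi
        rw [Finset.mem_Ico] at hi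
        by_cases h0 : q.coeff i = 0
        · simp [h0]
        · have := (MvPolynomial.totalDegree_coeff_finSuccEquiv_add_le F i h0).trans hFdeg
          rw [← hq] at this
          omega
      · intro w
        show c (Fin.snoc w 0) + c (Fin.snoc w 1) = _
        rw [hFeval w 0, hFeval w 1, ← Polynomial.coeff_zero_eq_eval_zero]
        have hlt : (Polynomial.map (MvPolynomial.eval w) q).natDegree < N :=
          lt_of_le_of_lt Polynomial.natDegree_map_le (Nat.lt_succ_self _)
        rw [Polynomial.eval_eq_sum_range' hlt, map_sum]
        simp only [one_pow, mul_one, Polynomial.coeff_map]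
        rw [Finset.range_eq_Ico, Finset.sum_eq_sum_Ico_succ_bot (by omega : 0 < N)]
        rw [← add_assoc, CharTwo.add_self_eq_zero, zero_add]
  · rintro ⟨⟨g, hg, hge⟩, ⟨h, hh, hhe⟩⟩
    refine ⟨MvPolynomial.rename Fin.castSucc g +
      MvPolynomial.X (Fin.last m) * MvPolynomial.rename Fin.castSucc h, ?_, ?_⟩
    · refine (MvPolynomial.totalDegree_add _ _).trans (max_le ?_ ?_)
      · exact (MvPolynomial.totalDegree_rename_le _ g).trans hg
      · refine (MvPolynomial.totalDegree_mul _ _).trans ?_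
        have h1 : (MvPolynomial.X (Fin.last m) :
            MvPolynomial (Fin (m + 1)) (ZMod 2)).totalDegree = 1 :=
          MvPolynomial.totalDegree_X _
        have h2 := (MvPolynomial.totalDegree_rename_le Fin.castSucc h).trans hh
        omega
    · intro x
      have hx : x = Fin.snoc (x ∘ Fin.castSucc) (x (Fin.last m)) := by
        funext i
        refine Fin.lastCases ?_ (fun j => ?_) i <;> simp
      have hcomp : ∀ s : ZMod 2,
          (Fin.snoc (x ∘ Fin.castSucc) s : Fin (m + 1) → ZMod 2) ∘ Fin.castSucc =
            x ∘ Fin.castSucc := by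
        intro s; funext j; simp
      have h2 : x (Fin.last m) = 0 ∨ x (Fin.last m) = 1 := by
        have : ∀ s : ZMod 2, s = 0 ∨ s = 1 := by decide
        exact this _
      simp only [map_add, map_mul, MvPolynomial.eval_rename, MvPolynomial.eval_X]
      rcases h2 with hs | hs
      · rw [hx, hs, hcomp]
        have := hge (x ∘ Fin.castSucc)
        simp only [Fin.snoc_last, hs] at *
        rw [this]
        ring
      · rw [hx, hs, hcomp]
        have h1' := hhe (x ∘ Fin.castSucc)
        have h0' := hge (x ∘ Fin.castSucc)
        simp only at h1' h0'
        have : c (Fin.snoc (x ∘ Fin.castSucc) 1) =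
            MvPolynomial.eval (x ∘ Fin.castSucc) g +
              MvPolynomial.eval (x ∘ Fin.castSucc) h := by
          rw [← h0', ← h1']; ring_nf
          rw [show (2 : ZMod 2) = 0 by decide]; ring
        simp only [Fin.snoc_last]
        rw [this]; ring
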